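/- For every integer k ≥ 1, there exists a binary word of length at least k²/2 − √2·k containing no abelian square xx′ with |x| ≥ k. More precisely, taking q = ⌊(√(1+2k²) − 1)/2⌋, there is a binary word of length q(q+1) avoiding all abelian squares of order ≥ k, and q(q+1) > k²/2 − √2·k. -/

import Mathlib

/-- `w` contains no abelian square `x x'` with `k ≤ |x|`. -/
def AvoidsOrder (w : List Bool) (k : ℕ) : Prop :=
  ∀ u v x x' : List Bool, w = u ++ x ++ x' ++ v → x'.Perm x → x.length < k

namespace Stmt6Aux

/-- `a_i = ⌊i² / (2n)⌋`. -/
def fseq (n i : ℕ) : ℕ := i ^ 2 / (2 * n)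

lemma fseq_mono (n : ℕ) {s t : ℕ} (h : s ≤ t) : fseq n s ≤ fseq n t :=
  Nat.div_le_div_right (Nat.pow_le_pow_left h 2)

lemma fseq_step (n i : ℕ) (h : i < n) : fseq n (i + 1) ≤ fseq n i + 1 := by
  have hn : 0 < 2 * n := by omega
  have h1 : (i + 1) ^ 2 ≤ i ^ 2 + 2 * n := by nlinarith
  calc fseq n (i + 1) ≤ (i ^ 2 + 2 * n) / (2 * n) := Nat.div_le_div_right h1
    _ = i ^ 2 / (2 * n) + 1 := Nat.add_div_right _ hn
    _ = fseq n i + 1 := rfl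

/-- the word as a boolean sequence of first differences -/
def f (n i : ℕ) : Bool := decide (fseq n i < fseq n (i + 1))

lemma count_seg (n s : ℕ) : ∀ m, s + m ≤ n →
    ((List.range' s m).map (f n)).count true = fseq n (s + m) - fseq n s := by
  intro m
  induction m with
  | zero => simp
  | succ m ih =>
    intro h
    have hadd : fseq n (s + (m + 1)) = fseq n (s + m + 1) := rfl
    rw [List.range'_concat, List.map_append, List.count_append, ih (by omega), hadd]
    have hmono : fseq n s ≤ fseq n (s + m) := fseq_mono n (by omega)
    have hstep : fseq n (s + m + 1) ≤ fseq n (s + m) + 1 := fseq_step n _ (by omega)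
    have hmono2 : fseq n (s + m) ≤ fseq n (s + m + 1) := fseq_mono n (by omega)
    have hsingle : (List.map (f n) [s + 1 * m]).count true
        = if fseq n (s + m) < fseq n (s + m + 1) then 1 else 0 := by
      simp only [one_mul, List.map_cons, List.map_nil, f]
      split_ifs with hc <;> simp [hc]
    rw [hsingle]
    split_ifs with hc <;> omega

lemma range'_split (s a b : ℕ) :
    List.range' s (a + b) = List.range' s a ++ List.range' (s + a) b := by
  rw [← List.range'_append, one_mul]

lemma avoids (q k : ℕ) (hk : 1 ≤ k) (hqk : 2 * (q * (q + 1)) ≤ k ^ 2) :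
    ∃ w : List Bool, w.length = q * (q + 1) ∧ AvoidsOrder w k := by
  set n := q * (q + 1) with hn
  refine ⟨(List.range' 0 n).map (f n), by simp, ?_⟩
  intro u v x x' hw hperm
  set p := u.length with hp
  set m := x.length with hm
  have hx'len : x'.length = m := hperm.length_eq
  have hlen0 := congrArg List.length hw
  simp only [List.length_append, List.length_map, List.length_range'] at hlen0
  have hlen : n = p + (m + (m + v.length)) := by omega
  rcases Nat.eq_zero_or_pos m with hm0 | hmpos
  · omega
  have hpm : p + 2 * m ≤ n := by omega
  -- decompose the word
  have hsplit : List.range' 0 n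
      = List.range' 0 p ++ (List.range' p m ++ (List.range' (p + m) m
          ++ List.range' (p + 2 * m) v.length)) := by
    rw [hlen, range'_split, range'_split, range'_split, Nat.zero_add,
      show p + m + m = p + 2 * m from by omega]
  have hw' : u ++ (x ++ (x' ++ v))
      = (List.range' 0 p).map (f n) ++ ((List.range' p m).map (f n)
          ++ ((List.range' (p + m) m).map (f n)
            ++ (List.range' (p + 2 * m) v.length).map (f n))) := by
    rw [← List.map_append, ← List.map_append, ← List.map_append, ← hsplit]
    simpa using hw.symm
  obtain ⟨-, hw2⟩ := List.append_inj hw' (by simp [hp])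
  obtain ⟨hx, hw3⟩ := List.append_inj hw2 (by simp [hm])
  obtain ⟨hx', -⟩ := List.append_inj hw3 (by simp [hx'len])
  -- counts of ones
  have c1 : x.count true = fseq n (p + m) - fseq n p := by
    rw [hx]; exact count_seg n p m (by omega)
  have c2 : x'.count true = fseq n (p + 2 * m) - fseq n (p + m) := by
    rw [hx']
    have := count_seg n (p + m) m (by omega)
    rw [this]
    congr 2
    omega
  have hcc : x'.count true = x.count true := hperm.count_eq true
  have mono1 : fseq n p ≤ fseq n (p + m) := fseq_mono n (by omega)
  have mono2 : fseq n (p + m) ≤ fseq n (p + 2 * m) := fseq_mono n (by omega)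
  have heq : fseq n p + fseq n (p + 2 * m) = 2 * fseq n (p + m) := by omega
  -- arithmetic with remainders
  have hNpos : 0 < 2 * n := by omega
  have e0 : 2 * n * fseq n p + p ^ 2 % (2 * n) = p ^ 2 := Nat.div_add_mod _ _
  have e1 : 2 * n * fseq n (p + m) + (p + m) ^ 2 % (2 * n) = (p + m) ^ 2 :=
    Nat.div_add_mod _ _
  have e2 : 2 * n * fseq n (p + 2 * m) + (p + 2 * m) ^ 2 % (2 * n) = (p + 2 * m) ^ 2 :=
    Nat.div_add_mod _ _
  have hr0 : p ^ 2 % (2 * n) < 2 * n := Nat.mod_lt _ hNpos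
  have hr2 : (p + 2 * m) ^ 2 % (2 * n) < 2 * n := Nat.mod_lt _ hNpos
  have h : 2 * n * fseq n p + p ^ 2 % (2 * n)
      + (2 * n * fseq n (p + 2 * m) + (p + 2 * m) ^ 2 % (2 * n))
      = 2 * (2 * n * fseq n (p + m) + (p + m) ^ 2 % (2 * n)) + 2 * m ^ 2 := by
    rw [e0, e1, e2]; ring
  have hNA : 2 * n * fseq n p + 2 * n * fseq n (p + 2 * m)
      = 2 * (2 * n * fseq n (p + m)) := by
    rw [← Nat.mul_add, heq]; ring
  have hm2 : m ^ 2 < 2 * n := by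
    have h2 : 2 * m ^ 2 + 2 * ((p + m) ^ 2 % (2 * n))
        = p ^ 2 % (2 * n) + (p + 2 * m) ^ 2 % (2 * n) := by omega
    omega
  have hmk : m ^ 2 < k ^ 2 := lt_of_lt_of_le hm2 hqk
  by_contra hcon
  push_neg at hcon
  exact absurd (Nat.pow_le_pow_left hcon 2) (by omega)

end Stmt6Aux

theorem stmt_6 (k : ℕ) (hk : 1 ≤ k) :
    ∀ q : ℕ, q = ⌊(Real.sqrt (1 + 2 * k ^ 2) - 1) / 2⌋₊ →
      (∃ w : List Bool, w.length = q * (q + 1) ∧ AvoidsOrder w k) ∧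
      (k : ℝ) ^ 2 / 2 - Real.sqrt 2 * k < (q * (q + 1) : ℕ) := by
  intro q hq
  set s := Real.sqrt (1 + 2 * (k : ℝ) ^ 2) with hs
  have hkR : (1 : ℝ) ≤ (k : ℝ) := by exact_mod_cast hk
  have harg : (0 : ℝ) ≤ 1 + 2 * (k : ℝ) ^ 2 := by positivity
  have hs2 : s ^ 2 = 1 + 2 * (k : ℝ) ^ 2 := Real.sq_sqrt harg
  have hs0 : 0 ≤ s := Real.sqrt_nonneg _
  have hs1 : 1 ≤ s := Real.one_le_sqrt.mpr (by nlinarith)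
  -- q ≤ (s-1)/2
  have hqle : (q : ℝ) ≤ (s - 1) / 2 := by
    rw [hq]
    exact Nat.floor_le (by linarith)
  have hql : 2 * (q : ℝ) + 1 ≤ s := by linarith
  have hA : 2 * (q * (q + 1)) ≤ k ^ 2 := by
    have hR : (2 * (q * (q + 1)) : ℝ) ≤ (k : ℝ) ^ 2 := by nlinarith
    exact_mod_cast hR
  refine ⟨Stmt6Aux.avoids q k hk hA, ?_⟩
  -- lower bound on q(q+1)
  have hqgt : (s - 1) / 2 < (q : ℝ) + 1 := by
    rw [hq]; exact Nat.lt_floor_add_one _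
  set t := Real.sqrt 2 with ht
  have ht2 : t ^ 2 = 2 := Real.sq_sqrt (by norm_num)
  have ht0 : 0 ≤ t := Real.sqrt_nonneg _
  have ht1 : (1 : ℝ) ≤ t := Real.one_le_sqrt.mpr (by norm_num)
  have h2k : t ^ 2 * (k : ℝ) ^ 2 = 2 * (k : ℝ) ^ 2 := by rw [ht2]
  have htk1 : (1 : ℝ) ≤ t * k := by nlinarith
  have hst : s < t * k + 1 := by
    have h1 : (1 : ℝ) + 2 * (k : ℝ) ^ 2 < (t * k + 1) ^ 2 := by nlinarith [h2k, htk1]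
    calc s < Real.sqrt ((t * k + 1) ^ 2) := Real.sqrt_lt_sqrt harg h1
      _ = t * k + 1 := Real.sqrt_sq (by positivity)
  have habs : (s - 2) ^ 2 ≤ (2 * (q : ℝ) + 1) ^ 2 := by
    have h1 : -(2 * (q : ℝ) + 1) ≤ s - 2 := by linarith
    have h2 : s - 2 ≤ 2 * (q : ℝ) + 1 := by linarith
    exact sq_le_sq' h1 h2
  push_cast
  nlinarith [habs, hst, hs2]
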